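/- Under the assumptions of the three-wave theorem (ω ∈ C¹(ℝ^d, ℝ), ω(0)=0, ∇ω(0)=0, ω(v)>0 and ∇ω(v)≠0 for v≠0, all level sets of ω connected, and g ∈ C¹(ℝ^d, ℝ) with ω(v')+ω(v'')=ω(v'+v'') ⟹ g(v')+g(v'')=g(v'+v'')), define g̃(v) = g(v) − ∇g(0)·v. Then there exists μ : ω(ℝ^d) → ℝ, continuous on ω(ℝ^d) and C¹ on ω(ℝ^d) \ {0}, such that g̃(v) = μ(ω(v)) for all v ∈ ℝ^d. -/

import Mathlib

open Set Metric Filter Topology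

set_option maxHeartbeats 1000000
set_option synthInstance.maxHeartbeats 400000

private theorem key_deriv {d : ℕ} {ω g : (Fin d → ℝ) → ℝ}
    (hω : ContDiff ℝ 1 ω) (hg : ContDiff ℝ 1 g)
    (hω0 : ω 0 = 0) (hdω0 : fderiv ℝ ω 0 = 0)
    (hcoll : ∀ v w, ω v + ω w = ω (v + w) → g v + g w = g (v + w))
    {v : Fin d → ℝ} (hv : fderiv ℝ ω v ≠ 0)
    {b : Fin d → ℝ} (hb : fderiv ℝ ω v b = 0) :
    fderiv ℝ g v b = fderiv ℝ g 0 b := by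
  set ℓ := fderiv ℝ ω v with hℓ
  obtain ⟨u₀, hu₀⟩ : ∃ x, ℓ x ≠ 0 := by
    by_contra h
    push_neg at h
    exact hv (ContinuousLinearMap.ext fun x => by simpa using h x)
  set u : Fin d → ℝ := (ℓ u₀)⁻¹ • u₀ with hu_def
  have hu : ℓ u = 1 := by
    simp [hu_def, map_smul, inv_mul_cancel₀ hu₀]
  set L : (ℝ × ℝ) →L[ℝ] (Fin d → ℝ) :=
    (ContinuousLinearMap.fst ℝ ℝ ℝ).smulRight b + (ContinuousLinearMap.snd ℝ ℝ ℝ).smulRight u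
    with hL_def
  have hL : ∀ p : ℝ × ℝ, L p = p.1 • b + p.2 • u := fun p => rfl
  set Φ : ℝ × ℝ → ℝ × ℝ := fun p => (p.1, ω (v + L p) - ω (L p)) with hΦ_def
  have hΦcd : ContDiff ℝ 1 Φ :=
    contDiff_fst.prodMk (((hω.comp (contDiff_const.add L.contDiff)).sub
      (hω.comp L.contDiff)))
  -- derivative of Φ at 0 is the identity
  have hωv : HasFDerivAt ω ℓ v := (hω.differentiable one_ne_zero v).hasFDerivAt
  have hω0' : HasFDerivAt ω (0 : (Fin d → ℝ) →L[ℝ] ℝ) 0 := by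
    have := (hω.differentiable one_ne_zero 0).hasFDerivAt
    rwa [hdω0] at this
  have h1 : HasFDerivAt (fun p : ℝ × ℝ => ω (v + L p)) (ℓ.comp L) 0 := by
    have haff : HasFDerivAt (fun p : ℝ × ℝ => v + L p) L 0 := L.hasFDerivAt.const_add v
    have hωv' : HasFDerivAt ω ℓ ((fun p : ℝ × ℝ => v + L p) 0) := by simpa using hωv
    exact hωv'.comp 0 haff
  have h2 : HasFDerivAt (fun p : ℝ × ℝ => ω (L p))
      ((0 : (Fin d → ℝ) →L[ℝ] ℝ).comp L) 0 := by
    have hω0'' : HasFDerivAt ω (0 : (Fin d → ℝ) →L[ℝ] ℝ) ((fun p : ℝ × ℝ => L p) 0) := by simpa using hω0'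
    exact hω0''.comp 0 L.hasFDerivAt
  have hΦ' : HasFDerivAt Φ
      (↑(ContinuousLinearEquiv.refl ℝ (ℝ × ℝ)) : (ℝ × ℝ) →L[ℝ] (ℝ × ℝ)) 0 := by
    have hfst : HasFDerivAt (fun p : ℝ × ℝ => p.1)
        (ContinuousLinearMap.fst ℝ ℝ ℝ) 0 := (ContinuousLinearMap.fst ℝ ℝ ℝ).hasFDerivAt
    have hpr := hfst.prodMk (h1.sub h2)
    have heq : ((ContinuousLinearMap.fst ℝ ℝ ℝ).prod
        (ℓ.comp L - (0 : (Fin d → ℝ) →L[ℝ] ℝ).comp L))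
        = (↑(ContinuousLinearEquiv.refl ℝ (ℝ × ℝ)) : (ℝ × ℝ) →L[ℝ] (ℝ × ℝ)) := by
      apply ContinuousLinearMap.ext
      intro p
      have h3 : ℓ (L p) = p.2 := by
        simp [hL, map_add, map_smul, smul_eq_mul, hb, hu]
      simp [ContinuousLinearMap.prod_apply, h3, Prod.ext_iff]
    rw [heq] at hpr
    exact hpr
  have hΦat : ContDiffAt ℝ 1 Φ 0 := hΦcd.contDiffAt
  have hs := hΦat.hasStrictFDerivAt' hΦ' one_ne_zero
  set inv := hs.localInverse Φ _ _ with hinv_def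
  have hleft := hs.eventually_left_inverse
  have hright := hs.eventually_right_inverse
  have hinv0 : inv (Φ 0) = 0 := hs.localInverse_apply_image
  have hΦ0 : Φ 0 = (0, ω v) := by simp [hΦ_def, hω0]
  -- the curve
  set c : ℝ → ℝ × ℝ := fun t => inv (t, ω v) with hc_def
  have hj : Continuous (fun t : ℝ => ((t, ω v) : ℝ × ℝ)) := by fun_prop
  have hev : ∀ᶠ t in 𝓝 (0 : ℝ), Φ (c t) = (t, ω v) := by
    have : Tendsto (fun t : ℝ => ((t, ω v) : ℝ × ℝ)) (𝓝 0) (𝓝 (Φ 0)) := by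
      rw [hΦ0]; exact (hj.tendsto 0)
    exact this.eventually hright
  set w : ℝ → (Fin d → ℝ) := fun t => L (c t) with hw_def
  have hres : ∀ᶠ t in 𝓝 (0 : ℝ), g v + g (w t) = g (v + w t) := by
    filter_upwards [hev] with t ht
    have h2 : ω (v + w t) - ω (w t) = ω v := congrArg Prod.snd ht
    exact hcoll v (w t) (by linarith)
  -- derivative of the curve
  have hinv' := hs.to_localInverse
  have hcd : HasDerivAt c ((1 : ℝ), (0 : ℝ)) 0 := by
    have hjd : HasDerivAt (fun t : ℝ => ((t, ω v) : ℝ × ℝ)) (1, 0) 0 :=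
      (hasDerivAt_id 0).prodMk (hasDerivAt_const 0 (ω v))
    have := (hΦ0 ▸ hinv'.hasFDerivAt).comp_hasDerivAt 0 hjd
    simp only [Function.comp_def] at this
    rw [hc_def, hinv_def]
    simpa using this
  have hwd : HasDerivAt w b 0 := by
    have := L.hasFDerivAt.comp_hasDerivAt 0 hcd
    simpa [hw_def, hL, Function.comp_def] using this
  have hw0 : w 0 = 0 := by
    have : c 0 = 0 := by rw [hc_def]; simp only [← hΦ0]; exact hinv0
    simp [hw_def, this]
  -- differentiate the resonance identity
  have hq1 : HasDerivAt (fun t => g (v + w t)) (fderiv ℝ g v b) 0 := by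
    have hgat : HasFDerivAt g (fderiv ℝ g v) (v + w 0) := by
      rw [hw0, add_zero]; exact (hg.differentiable one_ne_zero v).hasFDerivAt
    have hvw : HasDerivAt (fun t => v + w t) b 0 := hwd.const_add v
    simpa [Function.comp_def] using hgat.comp_hasDerivAt 0 hvw
  have hq2 : HasDerivAt (fun t => g v + g (w t)) (fderiv ℝ g 0 b) 0 := by
    have hgat : HasFDerivAt g (fderiv ℝ g 0) (w 0) := by
      rw [hw0]; exact (hg.differentiable one_ne_zero 0).hasFDerivAt
    simpa using (hgat.comp_hasDerivAt 0 hwd).const_add (g v)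
  have := (hq2.congr_of_eventuallyEq (hres.mono fun t ht => ht.symm)).unique hq1
  exact this.symm

private theorem local_const {d : ℕ} {ω g : (Fin d → ℝ) → ℝ}
    (hω : ContDiff ℝ 1 ω) (hg : ContDiff ℝ 1 g)
    (hω0 : ω 0 = 0) (hdω0 : fderiv ℝ ω 0 = 0)
    (hωpos : ∀ v : Fin d → ℝ, v ≠ 0 → 0 < ω v)
    (hdω : ∀ v : Fin d → ℝ, v ≠ 0 → fderiv ℝ ω v ≠ 0)
    (hcoll : ∀ v w, ω v + ω w = ω (v + w) → g v + g w = g (v + w))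
    {x₀ : Fin d → ℝ} (hx₀ : x₀ ≠ 0) :
    ∀ᶠ x in 𝓝 x₀, ω x = ω x₀ →
      g x - fderiv ℝ g 0 x = g x₀ - fderiv ℝ g 0 x₀ := by
  classical
  set g' : (Fin d → ℝ) →L[ℝ] ℝ := fderiv ℝ g 0 with hg'_def
  set ℓ := fderiv ℝ ω x₀ with hℓ_def
  obtain ⟨u₀, hu₀⟩ : ∃ x, ℓ x ≠ 0 := by
    by_contra h
    push_neg at h
    exact (hdω x₀ hx₀) (ContinuousLinearMap.ext fun x => by simpa using h x)
  set u : Fin d → ℝ := (ℓ u₀)⁻¹ • u₀ with hu_def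
  have hu : ℓ u = 1 := by simp [hu_def, map_smul, inv_mul_cancel₀ hu₀]
  set Φ : (Fin d → ℝ) → (Fin d → ℝ) := fun x => x + (ω x - ℓ x) • u with hΦ_def
  have hΦcd : ContDiff ℝ 1 Φ :=
    contDiff_id.add ((hω.sub ℓ.contDiff).smul contDiff_const)
  have hℓΦ : ∀ x, ℓ (Φ x) = ω x := by
    intro x
    simp [hΦ_def, map_add, map_smul, hu, smul_eq_mul]
  have hωx₀ : HasFDerivAt ω ℓ x₀ := (hω.differentiable one_ne_zero x₀).hasFDerivAt
  have hΦ' : HasFDerivAt Φ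
      (↑(ContinuousLinearEquiv.refl ℝ (Fin d → ℝ)) : (Fin d → ℝ) →L[ℝ] (Fin d → ℝ)) x₀ := by
    have h1 : HasFDerivAt (fun x : Fin d → ℝ => (ω x - ℓ x) • u)
        ((ℓ - ℓ).smulRight u) x₀ := (hωx₀.sub ℓ.hasFDerivAt).smul_const u
    have h2 := (hasFDerivAt_id x₀).add h1
    have heq : (ContinuousLinearMap.id ℝ (Fin d → ℝ)) + (ℓ - ℓ).smulRight u
        = (↑(ContinuousLinearEquiv.refl ℝ (Fin d → ℝ)) : (Fin d → ℝ) →L[ℝ] (Fin d → ℝ)) := by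
      apply ContinuousLinearMap.ext
      intro x
      simp
    rw [heq] at h2
    exact h2
  have hΦat : ContDiffAt ℝ 1 Φ x₀ := hΦcd.contDiffAt
  have hs := hΦat.hasStrictFDerivAt' hΦ' one_ne_zero
  set inv := hs.localInverse Φ _ _ with hinv_def
  have hinvcd : ContDiffAt ℝ 1 inv (Φ x₀) := hΦat.to_localInverse hΦ' one_ne_zero
  obtain ⟨U, hU, hUcd⟩ : ∃ U ∈ 𝓝 (Φ x₀), ContDiffOn ℝ 1 inv U :=
    hinvcd.contDiffOn le_rfl (by simp)
  have hright := hs.eventually_right_inverse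
  set W : Set (Fin d → ℝ) := {y | Φ (inv y) = y} with hW_def
  have hW : W ∈ 𝓝 (Φ x₀) := hright
  obtain ⟨ε, hε, hball⟩ : ∃ ε > 0, ball (Φ x₀) ε ⊆ interior U ∩ interior W := by
    rcases Metric.mem_nhds_iff.1 (Filter.inter_mem
      (interior_mem_nhds.2 hU) (interior_mem_nhds.2 hW)) with ⟨ε, hε, h⟩
    exact ⟨ε, hε, h⟩
  -- the kernel parametrization
  set K := LinearMap.ker (ℓ : (Fin d → ℝ) →ₗ[ℝ] ℝ) with hK_def
  set ι : K →L[ℝ] (Fin d → ℝ) := K.subtypeL with hι_def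
  set γ : K → (Fin d → ℝ) := fun k => inv (Φ x₀ + ι k) with hγ_def
  set B := ball (0 : K) ε with hB_def
  have hmem : ∀ k : K, k ∈ B → Φ x₀ + ι k ∈ ball (Φ x₀) ε := by
    intro k hk
    rw [mem_ball_iff_norm, add_sub_cancel_left]
    simpa [hB_def, mem_ball_iff_norm, hι_def] using hk
  have hΦγ : ∀ k ∈ B, Φ (γ k) = Φ x₀ + ι k := by
    intro k hk
    have h : Φ x₀ + ι k ∈ W := interior_subset (hball (hmem k hk)).2
    exact h
  have hωγ : ∀ k ∈ B, ω (γ k) = ω x₀ := by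
    intro k hk
    have h1 := hΦγ k hk
    have h2 : ℓ (Φ (γ k)) = ℓ (Φ x₀) + ℓ (ι k) := by rw [h1, map_add]
    have h3 : ℓ (ι k) = 0 := k.2
    rw [hℓΦ, hℓΦ] at h2
    rw [h2, h3, add_zero]
  have hγ0 : γ 0 = x₀ := by
    have : Φ x₀ + ι (0 : K) = Φ x₀ := by simp
    rw [hγ_def]
    simp only [this]
    exact hs.localInverse_apply_image
  -- derivative of γ on B is killed by fderiv ω and by fderiv g̃
  have hγd : ∀ k ∈ B, HasFDerivAt γ ((fderiv ℝ inv (Φ x₀ + ι k)).comp ι) k := by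
    intro k hk
    have hy : Φ x₀ + ι k ∈ interior U := (hball (hmem k hk)).1
    have hdiff : DifferentiableAt ℝ inv (Φ x₀ + ι k) :=
      ((hUcd.differentiableOn one_ne_zero).mono interior_subset).differentiableAt
        (isOpen_interior.mem_nhds hy)
    have hA : HasFDerivAt (fun k : K => Φ x₀ + ι k) ι k := ι.hasFDerivAt.const_add _
    exact hdiff.hasFDerivAt.comp k hA
  have hγne : ∀ k ∈ B, γ k ≠ 0 := by
    intro k hk h0
    have := hωγ k hk
    rw [h0, hω0] at this
    exact (hωpos x₀ hx₀).ne' this.symm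
  have hωγd : ∀ k ∈ B, (fderiv ℝ ω (γ k)).comp ((fderiv ℝ inv (Φ x₀ + ι k)).comp ι)
      = 0 := by
    intro k hk
    have h1 : HasFDerivAt (fun k' : K => ω (γ k'))
        ((fderiv ℝ ω (γ k)).comp ((fderiv ℝ inv (Φ x₀ + ι k)).comp ι)) k :=
      ((hω.differentiable one_ne_zero (γ k)).hasFDerivAt).comp k (hγd k hk)
    have h2 : HasFDerivAt (fun _ : K => ω x₀)
        (0 : K →L[ℝ] ℝ) k := hasFDerivAt_const _ _
    have heq : (fun k' : K => ω (γ k')) =ᶠ[𝓝 k] (fun _ : K => ω x₀) := by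
      filter_upwards [isOpen_ball.mem_nhds hk] with k' hk'
      exact hωγ k' hk'
    exact h1.unique (h2.congr_of_eventuallyEq heq)
  have htilded : ∀ k ∈ B, HasFDerivAt (fun k' : K => g (γ k') - g' (γ k'))
      (0 : K →L[ℝ] ℝ) k := by
    intro k hk
    have hgd : HasFDerivAt (fun k' : K => g (γ k'))
        ((fderiv ℝ g (γ k)).comp ((fderiv ℝ inv (Φ x₀ + ι k)).comp ι)) k :=
      ((hg.differentiable one_ne_zero (γ k)).hasFDerivAt).comp k (hγd k hk)
    have hld : HasFDerivAt (fun k' : K => g' (γ k'))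
        (g'.comp ((fderiv ℝ inv (Φ x₀ + ι k)).comp ι)) k :=
      (g'.hasFDerivAt).comp k (hγd k hk)
    have := hgd.sub hld
    refine this.congr_fderiv ?_
    apply ContinuousLinearMap.ext
    intro e
    have hb : fderiv ℝ ω (γ k) (((fderiv ℝ inv (Φ x₀ + ι k)).comp ι) e) = 0 := by
      have := congrArg (fun (T : K →L[ℝ] ℝ) => T e) (hωγd k hk)
      simpa using this
    have hkey := key_deriv hω hg hω0 hdω0 hcoll (hdω (γ k) (hγne k hk)) hb
    simp only [ContinuousLinearMap.zero_apply, ContinuousLinearMap.sub_apply,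
      ContinuousLinearMap.comp_apply, hg'_def] at hkey ⊢
    rw [hkey, sub_self]
  -- constancy of g̃ ∘ γ on B
  have hconst : ∀ k ∈ B, g (γ k) - g' (γ k) = g x₀ - g' x₀ := by
    intro k hk
    have h0B : (0 : K) ∈ B := by simp [hB_def, hε]
    have := Convex.norm_image_sub_le_of_norm_hasFDerivWithin_le
      (f := fun k' : K => g (γ k') - g' (γ k')) (f' := fun _ => (0 : K →L[ℝ] ℝ))
      (C := 0) (fun x hx => (htilded x hx).hasFDerivWithinAt)
      (fun x _ => le_of_eq norm_zero) (convex_ball _ _) h0B hk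
    have h2 : g (γ k) - g' (γ k) = g (γ 0) - g' (γ 0) := by
      have : ‖(g (γ k) - g' (γ k)) - (g (γ 0) - g' (γ 0))‖ ≤ 0 := by simpa using this
      have := norm_le_zero_iff.1 this
      linarith [sub_eq_zero.1 this]
    rw [h2, hγ0]
  -- conclude: eventually near x₀
  have hleft := hs.eventually_left_inverse
  have hΦtend : Tendsto Φ (𝓝 x₀) (𝓝 (Φ x₀)) := (hΦcd.continuous.tendsto x₀)
  filter_upwards [hleft, hΦtend (ball_mem_nhds (Φ x₀) hε)] with x hx hxball hωx
  have hkK : Φ x - Φ x₀ ∈ K := by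
    have : ℓ (Φ x - Φ x₀) = 0 := by
      rw [map_sub, hℓΦ, hℓΦ, hωx, sub_self]
    exact this
  set k : K := ⟨Φ x - Φ x₀, hkK⟩ with hk_def
  have hkB : k ∈ B := by
    simp only [hB_def, mem_ball_iff_norm, sub_zero]
    have : ‖(k : Fin d → ℝ)‖ < ε := by
      simpa [hk_def, mem_ball_iff_norm, dist_eq_norm] using hxball
    exact this
  have hγk : γ k = x := by
    have : Φ x₀ + ι k = Φ x := by
      simp [hk_def, hι_def]
    rw [hγ_def]
    simp only [this]
    exact hx
  have := hconst k hkB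
  rwa [hγk] at this

private theorem level_const {d : ℕ} {ω g : (Fin d → ℝ) → ℝ}
    (hω : ContDiff ℝ 1 ω) (hg : ContDiff ℝ 1 g)
    (hω0 : ω 0 = 0) (hdω0 : fderiv ℝ ω 0 = 0)
    (hωpos : ∀ v : Fin d → ℝ, v ≠ 0 → 0 < ω v)
    (hdω : ∀ v : Fin d → ℝ, v ≠ 0 → fderiv ℝ ω v ≠ 0)
    (hconn : ∀ a : ℝ, IsPreconnected (ω ⁻¹' {a}))
    (hcoll : ∀ v w, ω v + ω w = ω (v + w) → g v + g w = g (v + w))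
    (v w : Fin d → ℝ) (hvw : ω v = ω w) :
    g v - fderiv ℝ g 0 v = g w - fderiv ℝ g 0 w := by
  by_cases hv0 : v = 0
  · have hw0 : w = 0 := by
      by_contra hw0
      have := hωpos w hw0
      rw [← hvw, hv0, hω0] at this
      exact lt_irrefl _ this
    rw [hv0, hw0]
  · have ha : ω v ≠ 0 := (hωpos v hv0).ne'
    set a := ω v with ha_def
    set T : Set (Fin d → ℝ) := ω ⁻¹' {a} with hT_def
    haveI : PreconnectedSpace T := Subtype.preconnectedSpace (hconn a)
    set g' : (Fin d → ℝ) →L[ℝ] ℝ := fderiv ℝ g 0 with hg'_def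
    set A : Set T := {x : T | g ↑x - g' ↑x = g v - g' v} with hA_def
    have hclosed : IsClosed A := by
      apply isClosed_eq
      · exact ((hg.continuous.sub g'.continuous).comp continuous_subtype_val)
      · exact continuous_const
    have hopen : IsOpen A := by
      rw [isOpen_iff_mem_nhds]
      rintro ⟨x, hx⟩ hxA
      have hxa : ω x = a := hx
      have hx0 : x ≠ 0 := by
        intro h
        rw [h, hω0] at hxa
        exact ha hxa.symm
      have hev := local_const hω hg hω0 hdω0 hωpos hdω hcoll hx0
      have hpre : (Subtype.val ⁻¹' {y | ω y = ω x → g y - g' y = g x - g' x} : Set T) ∈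
          𝓝 (⟨x, hx⟩ : T) :=
        continuous_subtype_val.continuousAt.preimage_mem_nhds hev
      filter_upwards [hpre] with y hy
      have hya : ω ↑y = a := y.2
      have := hy (by rw [hya, hxa])
      rw [hA_def]
      simp only [mem_setOf_eq] at hxA ⊢
      rw [this, hxA]
    have hvT : v ∈ T := by simp [hT_def]; rfl
    have hne : A.Nonempty := ⟨⟨v, hvT⟩, rfl⟩
    have huniv : A = univ := IsClopen.eq_univ ⟨hclosed, hopen⟩ hne
    have hwT : w ∈ T := by simp [hT_def, hvw.symm]
    have : (⟨w, hwT⟩ : T) ∈ A := huniv ▸ mem_univ _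
    exact (this : g w - g' w = g v - g' v).symm

private theorem mu_rep {d : ℕ} {ω : (Fin d → ℝ) → ℝ}
    (hω : ContDiff ℝ 1 ω)
    (hdω : ∀ v : Fin d → ℝ, v ≠ 0 → fderiv ℝ ω v ≠ 0)
    {x₀ : Fin d → ℝ} (hx₀ : x₀ ≠ 0) :
    ∃ ε > 0, ∃ c : ℝ → (Fin d → ℝ),
      ContDiffOn ℝ 1 c (ball (ω x₀) ε) ∧ ∀ s ∈ ball (ω x₀) ε, ω (c s) = s := by
  classical
  set ℓ := fderiv ℝ ω x₀ with hℓ_def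
  obtain ⟨u₀, hu₀⟩ : ∃ x, ℓ x ≠ 0 := by
    by_contra h
    push_neg at h
    exact (hdω x₀ hx₀) (ContinuousLinearMap.ext fun x => by simpa using h x)
  set u : Fin d → ℝ := (ℓ u₀)⁻¹ • u₀ with hu_def
  have hu : ℓ u = 1 := by simp [hu_def, map_smul, inv_mul_cancel₀ hu₀]
  set Φ : (Fin d → ℝ) → (Fin d → ℝ) := fun x => x + (ω x - ℓ x) • u with hΦ_def
  have hΦcd : ContDiff ℝ 1 Φ :=
    contDiff_id.add ((hω.sub ℓ.contDiff).smul contDiff_const)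
  have hℓΦ : ∀ x, ℓ (Φ x) = ω x := by
    intro x
    simp [hΦ_def, map_add, map_smul, hu, smul_eq_mul]
  have hωx₀ : HasFDerivAt ω ℓ x₀ := (hω.differentiable one_ne_zero x₀).hasFDerivAt
  have hΦ' : HasFDerivAt Φ
      (↑(ContinuousLinearEquiv.refl ℝ (Fin d → ℝ)) : (Fin d → ℝ) →L[ℝ] (Fin d → ℝ)) x₀ := by
    have h1 : HasFDerivAt (fun x : Fin d → ℝ => (ω x - ℓ x) • u)
        ((ℓ - ℓ).smulRight u) x₀ := (hωx₀.sub ℓ.hasFDerivAt).smul_const u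
    have h2 := (hasFDerivAt_id x₀).add h1
    have heq : (ContinuousLinearMap.id ℝ (Fin d → ℝ)) + (ℓ - ℓ).smulRight u
        = (↑(ContinuousLinearEquiv.refl ℝ (Fin d → ℝ)) : (Fin d → ℝ) →L[ℝ] (Fin d → ℝ)) := by
      apply ContinuousLinearMap.ext
      intro x
      simp
    rw [heq] at h2
    exact h2
  have hΦat : ContDiffAt ℝ 1 Φ x₀ := hΦcd.contDiffAt
  have hs := hΦat.hasStrictFDerivAt' hΦ' one_ne_zero
  set inv := hs.localInverse Φ _ _ with hinv_def
  have hinvcd : ContDiffAt ℝ 1 inv (Φ x₀) := hΦat.to_localInverse hΦ' one_ne_zero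
  obtain ⟨U, hU, hUcd⟩ : ∃ U ∈ 𝓝 (Φ x₀), ContDiffOn ℝ 1 inv U :=
    hinvcd.contDiffOn le_rfl (by simp)
  have hright := hs.eventually_right_inverse
  set W : Set (Fin d → ℝ) := {y | Φ (inv y) = y} with hW_def
  have hW : W ∈ 𝓝 (Φ x₀) := hright
  obtain ⟨ε', hε', hball⟩ : ∃ ε' > 0, ball (Φ x₀) ε' ⊆ interior U ∩ interior W := by
    rcases Metric.mem_nhds_iff.1 (Filter.inter_mem
      (interior_mem_nhds.2 hU) (interior_mem_nhds.2 hW)) with ⟨ε', hε', h⟩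
    exact ⟨ε', hε', h⟩
  set a := ω x₀ with ha_def
  set ε : ℝ := ε' / (‖u‖ + 1) with hε_def
  have hupos : (0:ℝ) < ‖u‖ + 1 := by positivity
  have hεpos : 0 < ε := div_pos hε' hupos
  set j : ℝ → (Fin d → ℝ) := fun s => Φ x₀ + (s - a) • u with hj_def
  have hmaps : ∀ s ∈ ball a ε, j s ∈ ball (Φ x₀) ε' := by
    intro s hsb
    rw [mem_ball_iff_norm, add_sub_cancel_left, norm_smul]
    have h1 : ‖s - a‖ < ε := by simpa [mem_ball_iff_norm, Real.dist_eq] using hsb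
    calc ‖s - a‖ * ‖u‖ ≤ ‖s - a‖ * (‖u‖ + 1) := by
          apply mul_le_mul_of_nonneg_left (by linarith) (norm_nonneg _)
      _ < ε * (‖u‖ + 1) := by
          apply mul_lt_mul_of_pos_right h1 hupos
      _ = ε' := by
          rw [hε_def, div_mul_cancel₀ _ (ne_of_gt hupos)]
  refine ⟨ε, hεpos, fun s => inv (j s), ?_, ?_⟩
  · apply ContDiffOn.comp (t := interior U)
      ((hUcd.mono interior_subset))
    · apply ContDiff.contDiffOn
      exact contDiff_const.add ((contDiff_id.sub contDiff_const).smul contDiff_const)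
    · intro s hs
      exact (hball (hmaps s hs)).1
  · intro s hs
    have hmem : Φ (inv (j s)) = j s := by
      have h : j s ∈ W := interior_subset (hball (hmaps s hs)).2
      exact h
    have := hℓΦ (inv (j s))
    rw [hmem] at this
    rw [← this, hj_def]
    simp [map_add, map_smul, hℓΦ, hu, smul_eq_mul, ha_def]

theorem stmt_15 (d : ℕ) (hd : 2 ≤ d) (ω g : (Fin d → ℝ) → ℝ)
    (hω : ContDiff ℝ 1 ω) (hg : ContDiff ℝ 1 g)
    (hω0 : ω 0 = 0) (hdω0 : fderiv ℝ ω 0 = 0)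
    (hωpos : ∀ v : Fin d → ℝ, v ≠ 0 → 0 < ω v)
    (hdω : ∀ v : Fin d → ℝ, v ≠ 0 → fderiv ℝ ω v ≠ 0)
    (hconn : ∀ a : ℝ, IsPreconnected (ω ⁻¹' {a}))
    (hcoll : ∀ v w : Fin d → ℝ, ω v + ω w = ω (v + w) → g v + g w = g (v + w)) :
    ∃ μ : ℝ → ℝ, ContinuousOn μ (Set.range ω) ∧
      ContDiffOn ℝ 1 μ (Set.range ω \ {0}) ∧
      ∀ v : Fin d → ℝ, g v - fderiv ℝ g 0 v = μ (ω v) := by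
  classical
  have hg0 : g 0 = 0 := by
    have h := hcoll 0 0 (by simp [hω0])
    rw [add_zero] at h
    linarith
  set gt : (Fin d → ℝ) → ℝ := fun x => g x - fderiv ℝ g 0 x with hgt_def
  set μ : ℝ → ℝ := fun t => if h : ∃ x, ω x = t then gt (Classical.choose h) else 0
    with hμ_def
  have hμω : ∀ x, μ (ω x) = gt x := by
    intro x
    have hex : ∃ y, ω y = ω x := ⟨x, rfl⟩
    rw [hμ_def]
    simp only [dif_pos hex]
    exact level_const hω hg hω0 hdω0 hωpos hdω hconn hcoll _ x
      (Classical.choose_spec hex)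
  have hωnn : ∀ p, 0 ≤ ω p := by
    intro p
    by_cases hp : p = 0
    · rw [hp, hω0]
    · exact (hωpos p hp).le
  have hgtc : Continuous gt := hg.continuous.sub (fderiv ℝ g 0).continuous
  -- C¹ at positive points of the range
  have hC1 : ∀ a ∈ Set.range ω, a ≠ 0 → ContDiffAt ℝ 1 μ a := by
    rintro a ⟨x₀, rfl⟩ ha0
    have hx₀ : x₀ ≠ 0 := by
      intro h
      exact ha0 (by rw [h, hω0])
    obtain ⟨ε, hε, c, hccd, hc⟩ := mu_rep hω hdω hx₀
    have hρ : ContDiffOn ℝ 1 (fun s => gt (c s)) (ball (ω x₀) ε) :=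
      (hg.comp_contDiffOn hccd).sub ((fderiv ℝ g 0).contDiff.comp_contDiffOn hccd)
    have hρat : ContDiffAt ℝ 1 (fun s => gt (c s)) (ω x₀) :=
      hρ.contDiffAt (isOpen_ball.mem_nhds (mem_ball_self hε))
    apply hρat.congr_of_eventuallyEq
    filter_upwards [isOpen_ball.mem_nhds (mem_ball_self hε)] with s hsb
    conv_lhs => rw [← hc s hsb]
    rw [hμω]
  -- value at zero
  have hμ0 : μ 0 = 0 := by
    have hex : ∃ y, ω y = (0:ℝ) := ⟨0, hω0⟩
    rw [hμ_def]
    simp only [dif_pos hex]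
    have hch : Classical.choose hex = 0 := by
      by_contra h
      exact (hωpos _ h).ne' (Classical.choose_spec hex)
    rw [hch, hgt_def]
    simp [hg0]
  -- continuity within range at 0
  have hcont0 : ContinuousWithinAt μ (Set.range ω) 0 := by
    rw [Metric.continuousWithinAt_iff]
    intro ε hε
    have hgt0 : gt 0 = 0 := by simp [hgt_def, hg0]
    rcases Metric.continuousAt_iff.1 hgtc.continuousAt ε hε with ⟨r, hr, hball⟩
    set r' := r / 2 with hr'_def
    have hr' : 0 < r' := by positivity
    haveI : Nonempty (Fin d) := ⟨⟨0, by omega⟩⟩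
    have hsne : (Metric.sphere (0 : Fin d → ℝ) r').Nonempty :=
      NormedSpace.sphere_nonempty.2 hr'.le
    obtain ⟨z, hzS, hzmin⟩ := (isCompact_sphere (0 : Fin d → ℝ) r').exists_isMinOn
      hsne (hω.continuous.continuousOn)
    have hz0 : z ≠ 0 := by
      intro h
      rw [h, mem_sphere_zero_iff_norm] at hzS
      simp at hzS
      linarith
    refine ⟨ω z, hωpos z hz0, ?_⟩
    intro b hb hdist
    obtain ⟨p, hp⟩ := hb
    have hbnn : 0 ≤ b := hp ▸ hωnn p
    have hbδ : b < ω z := by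
      rw [Real.dist_eq, sub_zero, abs_of_nonneg hbnn] at hdist
      exact hdist
    obtain ⟨q, hqr, hq⟩ : ∃ q, ‖q‖ ≤ r' ∧ ω q = b := by
      by_cases hpr : ‖p‖ ≤ r'
      · exact ⟨p, hpr, hp⟩
      · push_neg at hpr
        have hpne : p ≠ 0 := by
          intro h
          rw [h, norm_zero] at hpr
          linarith
        have hpnorm : 0 < ‖p‖ := norm_pos_iff.2 hpne
        set t₀ := r' / ‖p‖ with ht₀_def
        have ht₀ : 0 < t₀ := div_pos hr' hpnorm
        have hsph : t₀ • p ∈ Metric.sphere (0 : Fin d → ℝ) r' := by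
          rw [mem_sphere_zero_iff_norm, norm_smul, Real.norm_eq_abs, abs_of_pos ht₀, ht₀_def,
            div_mul_cancel₀ _ hpnorm.ne']
        have hmin : ω z ≤ ω (t₀ • p) := hzmin hsph
        have hcontf : ContinuousOn (fun t : ℝ => ω (t • p)) (Icc 0 t₀) :=
          (hω.continuous.comp (continuous_id.smul continuous_const)).continuousOn
        have hmem : b ∈ Icc (ω ((0:ℝ) • p)) (ω (t₀ • p)) := by
          constructor
          · simpa [hω0] using hbnn
          · linarith
        obtain ⟨t, ht, hteq⟩ := intermediate_value_Icc ht₀.le hcontf hmem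
        refine ⟨t • p, ?_, hteq⟩
        rw [norm_smul, Real.norm_eq_abs, abs_of_nonneg ht.1]
        calc t * ‖p‖ ≤ t₀ * ‖p‖ := by nlinarith [ht.2, hpnorm.le]
          _ = r' := div_mul_cancel₀ _ hpnorm.ne'
    rw [← hq, hμω, hμ0]
    have hd1 : dist q 0 < r := by
      rw [dist_zero_right]
      calc ‖q‖ ≤ r' := hqr
        _ < r := by rw [hr'_def]; linarith
    have := hball hd1
    rw [hgt0] at this
    exact this
  refine ⟨μ, ?_, ?_, ?_⟩
  · intro a ha
    by_cases ha0 : a = 0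
    · subst ha0; exact hcont0
    · exact ((hC1 a ha ha0).continuousAt).continuousWithinAt
  · rintro a ⟨ha, ha0⟩
    exact ((hC1 a ha (by simpa using ha0)).contDiffWithinAt)
  · intro v
    exact (hμω v).symm
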